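/- In the quadratic quasi-Newton scheme, for all k ≥ 0 one has A ⪯ G_k ⪯ (L/μ)·A and λ_k ≤ (1 − μ/L)^k · λ_0. -/

import Mathlib

open Matrix Finset

/-- The Broyden family update of a Hessian approximation `G` with respect to
the target matrix `A` along direction `u`, parameterized by `τ`. -/
noncomputable def broyd {n : ℕ} (τ : ℝ) (A G : Matrix (Fin n) (Fin n) ℝ) (u : Fin n → ℝ) :
    Matrix (Fin n) (Fin n) ℝ :=
  if u = 0 then G
  else
    let aUU : ℝ := u ⬝ᵥ A.mulVec u
    let gUU : ℝ := u ⬝ᵥ G.mulVec u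
    let agaUU : ℝ := u ⬝ᵥ (A * G⁻¹ * A).mulVec u
    let ρ : ℝ := gUU / aUU
    let φ : ℝ := τ * (aUU / agaUU) / (τ * (aUU / agaUU) + (1 - τ) * ρ)
    φ • (G - aUU⁻¹ • (A * vecMulVec u u * G + G * vecMulVec u u * A)
          + ((ρ + 1) / aUU) • (A * vecMulVec u u * A)) +
    (1 - φ) • (G - gUU⁻¹ • (G * vecMulVec u u * G) + aUU⁻¹ • (A * vecMulVec u u * A))

/-- `psdLE P Q` (i.e. `P ⪯ Q`) : the matrix `Q - P` is positive semidefinite. -/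
def psdLE {n : ℕ} (P Q : Matrix (Fin n) (Fin n) ℝ) : Prop := (Q - P).PosSemidef

/-- The closeness measure ν(A, G, u). -/
noncomputable def nuMeas {n : ℕ} (A G : Matrix (Fin n) (Fin n) ℝ) (u : Fin n → ℝ) : ℝ :=
  Real.sqrt ((u ⬝ᵥ ((G - A) * G⁻¹ * (G - A)).mulVec u) / (u ⬝ᵥ A.mulVec u))

/-- The log-det barrier V(A, G) = ln det (A⁻¹ G). -/
noncomputable def logDetBarrier {n : ℕ} (A G : Matrix (Fin n) (Fin n) ℝ) : ℝ :=
  Real.log (A⁻¹ * G).det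

/-- The augmented log-det barrier ψ(G, A) = ln det (A⁻¹ G) - tr (G⁻¹ (G - A)). -/
noncomputable def psiBarrier {n : ℕ} (G A : Matrix (Fin n) (Fin n) ℝ) : ℝ :=
  Real.log (A⁻¹ * G).det - (G⁻¹ * (G - A)).trace

section Helpers

variable {n : ℕ}

private lemma psdLE_dot {P Q : Matrix (Fin n) (Fin n) ℝ} (h : psdLE P Q) (x : Fin n → ℝ) :
    x ⬝ᵥ P *ᵥ x ≤ x ⬝ᵥ Q *ᵥ x := by
  have h2 := h.dotProduct_mulVec_nonneg x
  rw [star_trivial, sub_mulVec, dotProduct_sub] at h2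
  linarith

private lemma herm_of_symm {M : Matrix (Fin n) (Fin n) ℝ} (h : Mᵀ = M) : M.IsHermitian := by
  rwa [Matrix.IsHermitian, conjTranspose_eq_transpose_of_trivial]

private lemma symm_of_herm {M : Matrix (Fin n) (Fin n) ℝ} (h : M.IsHermitian) : Mᵀ = M := by
  rw [← conjTranspose_eq_transpose_of_trivial]
  exact h.eq

private lemma psdLE_of_herm {P Q : Matrix (Fin n) (Fin n) ℝ} (h : (Q - P).IsHermitian)
    (hd : ∀ x : Fin n → ℝ, x ⬝ᵥ P *ᵥ x ≤ x ⬝ᵥ Q *ᵥ x) : psdLE P Q := by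
  refine Matrix.PosSemidef.of_dotProduct_mulVec_nonneg h fun x => ?_
  rw [star_trivial, sub_mulVec, dotProduct_sub, sub_nonneg]
  exact hd x

private lemma psdLE_trans {P Q R : Matrix (Fin n) (Fin n) ℝ} (h1 : psdLE P Q) (h2 : psdLE Q R) :
    psdLE P R := by
  have e : (Q - P) + (R - Q) = R - P := by abel
  unfold psdLE at *
  rw [← e]
  exact h1.add h2

private lemma psdLE_congr {P Q : Matrix (Fin n) (Fin n) ℝ} (h : psdLE P Q)
    (X : Matrix (Fin n) (Fin n) ℝ) : psdLE (Xᴴ * P * X) (Xᴴ * Q * X) := by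
  unfold psdLE at *
  have e : Xᴴ * Q * X - Xᴴ * P * X = Xᴴ * (Q - P) * X := by
    rw [Matrix.mul_sub, Matrix.sub_mul]
  rw [e]
  exact h.conjTranspose_mul_mul_same X

private lemma psdLE_smul {P Q : Matrix (Fin n) (Fin n) ℝ} (h : psdLE P Q) {c : ℝ} (hc : 0 ≤ c) :
    psdLE (c • P) (c • Q) := by
  unfold psdLE at *
  rw [← smul_sub]
  refine Matrix.PosSemidef.of_dotProduct_mulVec_nonneg (herm_of_symm ?_) fun x => ?_
  · rw [transpose_smul, symm_of_herm h.1]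
  · rw [star_trivial, smul_mulVec, dotProduct_smul, smul_eq_mul]
    have h2 := h.dotProduct_mulVec_nonneg x
    rw [star_trivial] at h2
    exact mul_nonneg hc h2

private lemma dot_symm {M : Matrix (Fin n) (Fin n) ℝ} (hM : Mᵀ = M) (x y : Fin n → ℝ) :
    x ⬝ᵥ M *ᵥ y = y ⬝ᵥ M *ᵥ x := by
  rw [dotProduct_mulVec, ← mulVec_transpose, hM, dotProduct_comm]

private lemma mulVec_dot {M : Matrix (Fin n) (Fin n) ℝ} (hM : Mᵀ = M) (v w : Fin n → ℝ) :
    (M *ᵥ v) ⬝ᵥ w = v ⬝ᵥ (M *ᵥ w) := by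
  rw [dotProduct_comm, dot_symm hM]

private lemma quad_conj {S M : Matrix (Fin n) (Fin n) ℝ} (hS : Sᵀ = S) (q : Fin n → ℝ) :
    (S *ᵥ q) ⬝ᵥ M *ᵥ (S *ᵥ q) = q ⬝ᵥ (S * M * S) *ᵥ q := by
  rw [mulVec_dot hS, mulVec_mulVec, mulVec_mulVec]

private lemma posDef_dot {M : Matrix (Fin n) (Fin n) ℝ} (hM : M.PosDef) {x : Fin n → ℝ}
    (hx : x ≠ 0) : 0 < x ⬝ᵥ M *ᵥ x := by
  have := hM.dotProduct_mulVec_pos hx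
  rwa [star_trivial] at this

private lemma detUnit {M : Matrix (Fin n) (Fin n) ℝ} (hM : M.PosDef) : IsUnit M.det :=
  isUnit_iff_ne_zero.mpr hM.det_pos.ne'

private lemma posDef_smul {M : Matrix (Fin n) (Fin n) ℝ} (hM : M.PosDef) {c : ℝ} (hc : 0 < c) :
    (c • M).PosDef := by
  refine Matrix.PosDef.of_dotProduct_mulVec_pos (herm_of_symm ?_) fun x hx => ?_
  · rw [transpose_smul, symm_of_herm hM.1]
  · rw [star_trivial, smul_mulVec, dotProduct_smul, smul_eq_mul]
    exact mul_pos hc (posDef_dot hM hx)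

private lemma dot_smul_eq (η : ℝ) (A : Matrix (Fin n) (Fin n) ℝ) (x y : Fin n → ℝ) :
    x ⬝ᵥ (η • A) *ᵥ y = η * (x ⬝ᵥ A *ᵥ y) := by
  rw [smul_mulVec, dotProduct_smul, smul_eq_mul]

private lemma psdLE_dot_smul {P Q : Matrix (Fin n) (Fin n) ℝ} {η : ℝ} (h : psdLE P (η • Q))
    (x : Fin n → ℝ) : x ⬝ᵥ P *ᵥ x ≤ η * (x ⬝ᵥ Q *ᵥ x) := by
  rw [← dot_smul_eq]
  exact psdLE_dot h x

open scoped MatrixOrder in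
private lemma mat_sqrt_exists {P : Matrix (Fin n) (Fin n) ℝ} (hP : P.PosSemidef) :
    ∃ R : Matrix (Fin n) (Fin n) ℝ, R.PosSemidef ∧ R * R = P :=
  ⟨CFC.sqrt P, Matrix.nonneg_iff_posSemidef.mp (CFC.sqrt_nonneg P),
    CFC.sqrt_mul_sqrt_self P (Matrix.nonneg_iff_posSemidef.mpr hP)⟩

private lemma sqrt_facts {P : Matrix (Fin n) (Fin n) ℝ} (hP : P.PosDef) :
    ∃ R : Matrix (Fin n) (Fin n) ℝ, R.PosSemidef ∧ R * R = P ∧ IsUnit R.det := by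
  obtain ⟨R, hRpsd, hRR⟩ := mat_sqrt_exists hP.posSemidef
  refine ⟨R, hRpsd, hRR, ?_⟩
  rw [isUnit_iff_ne_zero]
  intro h0
  have : P.det = 0 := by
    rw [← hRR, det_mul, h0, mul_zero]
  exact hP.det_pos.ne' this

private lemma psdLE_inv_one {M : Matrix (Fin n) (Fin n) ℝ} (hM : M.PosDef) (h : psdLE 1 M) :
    psdLE M⁻¹ 1 := by
  obtain ⟨R, hRpsd, hRR, hRdet⟩ := sqrt_facts hM
  have hMdet : IsUnit M.det := detUnit hM
  have hRh : Rᴴ = R := hRpsd.1.eq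
  have hMih : (M⁻¹)ᴴ = M⁻¹ := hM.1.inv.eq
  have hMM : psdLE M (M * M) := by
    have h2 := psdLE_congr h R
    have e1 : Rᴴ * (1 : Matrix (Fin n) (Fin n) ℝ) * R = M := by
      rw [hRh, Matrix.mul_one, hRR]
    have e2 : Rᴴ * M * R = M * M := by
      rw [hRh, ← hRR]
      simp only [Matrix.mul_assoc]
    rwa [e1, e2] at h2
  have h3 := psdLE_congr hMM M⁻¹
  have e3 : (M⁻¹)ᴴ * M * M⁻¹ = M⁻¹ := by
    rw [hMih, Matrix.nonsing_inv_mul M hMdet, Matrix.one_mul]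
  have e4 : (M⁻¹)ᴴ * (M * M) * M⁻¹ = 1 := by
    rw [hMih, ← Matrix.mul_assoc, Matrix.nonsing_inv_mul M hMdet, Matrix.one_mul,
      Matrix.mul_nonsing_inv M hMdet]
  rwa [e3, e4] at h3

private lemma psdLE_inv {P Q : Matrix (Fin n) (Fin n) ℝ} (hP : P.PosDef) (hQ : Q.PosDef)
    (h : psdLE P Q) : psdLE Q⁻¹ P⁻¹ := by
  obtain ⟨R, hRpsd, hRR, hRdet⟩ := sqrt_facts hP
  have hRh : Rᴴ = R := hRpsd.1.eq
  have hRih : (R⁻¹)ᴴ = R⁻¹ := hRpsd.1.inv.eq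
  have hRiR : R⁻¹ * R = 1 := Matrix.nonsing_inv_mul R hRdet
  have hRRi : R * R⁻¹ = 1 := Matrix.mul_nonsing_inv R hRdet
  have h1 : psdLE 1 (R⁻¹ * Q * R⁻¹) := by
    have h2 := psdLE_congr h R⁻¹
    have e1 : (R⁻¹)ᴴ * P * R⁻¹ = 1 := by
      rw [hRih, ← hRR, ← Matrix.mul_assoc, Matrix.mul_assoc R⁻¹ R R, ← Matrix.mul_assoc R⁻¹ R,
        hRiR, Matrix.one_mul, hRRi]
    rwa [e1, hRih] at h2
  have hMpos : (R⁻¹ * Q * R⁻¹).PosDef := by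
    refine Matrix.PosDef.of_dotProduct_mulVec_pos ?_ fun x hx => ?_
    · have := isHermitian_conjTranspose_mul_mul R⁻¹ hQ.1
      rwa [hRih] at this
    · rw [star_trivial]
      have e : (R⁻¹ * Q * R⁻¹) *ᵥ x = R⁻¹ *ᵥ (Q *ᵥ (R⁻¹ *ᵥ x)) := by
        rw [mulVec_mulVec, mulVec_mulVec]
      rw [e]
      have hRisym : (R⁻¹)ᵀ = R⁻¹ := symm_of_herm hRpsd.1.inv
      rw [show x ⬝ᵥ R⁻¹ *ᵥ (Q *ᵥ (R⁻¹ *ᵥ x)) = (R⁻¹ *ᵥ x) ⬝ᵥ (Q *ᵥ (R⁻¹ *ᵥ x)) from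
        (mulVec_dot hRisym x (Q *ᵥ (R⁻¹ *ᵥ x))).symm]
      refine posDef_dot hQ ?_
      intro h0
      apply hx
      have hxe : R *ᵥ (R⁻¹ *ᵥ x) = x := by rw [mulVec_mulVec, hRRi, one_mulVec]
      rw [← hxe, h0, mulVec_zero]
  have h2 : psdLE (R⁻¹ * Q * R⁻¹)⁻¹ 1 := psdLE_inv_one hMpos h1
  have hMinv : (R⁻¹ * Q * R⁻¹)⁻¹ = R * Q⁻¹ * R := by
    rw [Matrix.mul_inv_rev, Matrix.mul_inv_rev, Matrix.nonsing_inv_nonsing_inv R hRdet,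
      Matrix.mul_assoc]
  rw [hMinv] at h2
  have h3 := psdLE_congr h2 R⁻¹
  have e2 : (R⁻¹)ᴴ * (R * Q⁻¹ * R) * R⁻¹ = Q⁻¹ := by
    rw [hRih, ← Matrix.mul_assoc, ← Matrix.mul_assoc, hRiR, Matrix.one_mul,
      Matrix.mul_assoc, hRRi, Matrix.mul_one]
  have e3 : (R⁻¹)ᴴ * 1 * R⁻¹ = P⁻¹ := by
    rw [hRih, Matrix.mul_one, ← Matrix.mul_inv_rev, hRR]
  rwa [e2, e3] at h3

private lemma psdLE_conj_sq {A S : Matrix (Fin n) (Fin n) ℝ} (hA : A.PosDef)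
    (hS : S.PosSemidef) {c : ℝ} (hc : 0 ≤ c) (h : psdLE S (c • A)) :
    psdLE (S * A⁻¹ * S) ((c * c) • A) := by
  have hAinv : (A⁻¹).PosDef := hA.inv
  have hAdet : IsUnit A.det := detUnit hA
  obtain ⟨W, hWpsd, hWW, hWdet⟩ := sqrt_facts hAinv
  have hWh : Wᴴ = W := hWpsd.1.eq
  have hWih : (W⁻¹)ᴴ = W⁻¹ := hWpsd.1.inv.eq
  have hWiW : W⁻¹ * W = 1 := Matrix.nonsing_inv_mul W hWdet
  have hWWi : W * W⁻¹ = 1 := Matrix.mul_nonsing_inv W hWdet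
  have hW1 : W⁻¹ * W⁻¹ = A := by
    rw [← Matrix.mul_inv_rev, hWW, Matrix.nonsing_inv_nonsing_inv A hAdet]
  have hWAW : W * A * W = 1 := by
    rw [← hW1, ← Matrix.mul_assoc, Matrix.mul_assoc W W⁻¹, ← Matrix.mul_assoc W W⁻¹, hWWi,
      Matrix.one_mul, hWiW]
  have hMpsd : (W * S * W).PosSemidef := by
    have := hS.conjTranspose_mul_mul_same W
    rwa [hWh] at this
  have hMle : psdLE (W * S * W) (c • 1) := by
    have h2 := psdLE_congr h W
    rw [hWh] at h2
    have e : W * (c • A) * W = c • (1 : Matrix (Fin n) (Fin n) ℝ) := by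
      rw [Matrix.mul_smul, Matrix.smul_mul, hWAW]
    rwa [e] at h2
  have hM2 : psdLE ((W * S * W) * (W * S * W)) (c • (W * S * W)) := by
    obtain ⟨T, hTpsd, hTT⟩ : ∃ T : Matrix (Fin n) (Fin n) ℝ,
        T.PosSemidef ∧ T * T = W * S * W :=
      mat_sqrt_exists hMpsd
    have hTh : Tᴴ = T := hTpsd.1.eq
    have h2 := psdLE_congr hMle T
    have e1 : Tᴴ * (W * S * W) * T = (W * S * W) * (W * S * W) := by
      rw [hTh, ← hTT]
      simp only [Matrix.mul_assoc]
    have e2 : Tᴴ * (c • (1 : Matrix (Fin n) (Fin n) ℝ)) * T = c • (W * S * W) := by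
      rw [hTh, Matrix.mul_smul, Matrix.smul_mul, Matrix.mul_one, hTT]
    rwa [e1, e2] at h2
  have hM3 : psdLE ((W * S * W) * (W * S * W)) ((c * c) • 1) := by
    refine psdLE_trans hM2 ?_
    have := psdLE_smul hMle hc
    rwa [smul_smul] at this
  have h4 := psdLE_congr hM3 W⁻¹
  rw [hWih] at h4
  have e5 : W⁻¹ * ((W * S * W) * (W * S * W)) * W⁻¹ = S * A⁻¹ * S := by
    rw [← hWW]
    simp only [← Matrix.mul_assoc]
    rw [hWiW, Matrix.one_mul]
    simp only [Matrix.mul_assoc]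
    rw [hWWi, Matrix.mul_one]
  have e6 : W⁻¹ * ((c * c) • (1 : Matrix (Fin n) (Fin n) ℝ)) * W⁻¹ = (c * c) • A := by
    rw [Matrix.mul_smul, Matrix.smul_mul, Matrix.mul_one, hW1]
  rwa [e5, e6] at h4

private lemma vmv_mulVec (u v w : Fin n → ℝ) : vecMulVec u v *ᵥ w = (v ⬝ᵥ w) • u := by
  ext i
  simp only [mulVec, dotProduct, vecMulVec_apply, Pi.smul_apply, smul_eq_mul]
  rw [Finset.sum_mul]
  exact Finset.sum_congr rfl fun j _ => by ring

private lemma quad_mid (M N : Matrix (Fin n) (Fin n) ℝ) (u x : Fin n → ℝ) :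
    x ⬝ᵥ (M * vecMulVec u u * N) *ᵥ x = (x ⬝ᵥ M *ᵥ u) * (u ⬝ᵥ N *ᵥ x) := by
  rw [Matrix.mul_assoc, ← mulVec_mulVec, ← mulVec_mulVec, vmv_mulVec, mulVec_smul,
    dotProduct_smul, smul_eq_mul, mul_comm]

private lemma quad_comb {M : Matrix (Fin n) (Fin n) ℝ} (hM : Mᵀ = M) (x u : Fin n → ℝ)
    (c t : ℝ) :
    (c • x - t • u) ⬝ᵥ M *ᵥ (c • x - t • u)
      = c ^ 2 * (x ⬝ᵥ M *ᵥ x) - 2 * (c * t) * (x ⬝ᵥ M *ᵥ u) + t ^ 2 * (u ⬝ᵥ M *ᵥ u) := by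
  have hsym := dot_symm hM u x
  simp only [mulVec_sub, mulVec_smul, sub_dotProduct, dotProduct_sub, smul_dotProduct,
    dotProduct_smul, smul_eq_mul]
  rw [hsym]
  ring

private lemma scalar_bounds (xA xG a b s gq η : ℝ) (hs : 0 < s) (hgq : 0 < gq) (hη : 1 ≤ η)
    (hw1 : s ^ 2 * xA - 2 * (s * a) * a + a ^ 2 * s ≤ s ^ 2 * xG - 2 * (s * a) * b + a ^ 2 * gq)
    (hw1u : s ^ 2 * xG - 2 * (s * a) * b + a ^ 2 * gq
        ≤ η * (s ^ 2 * xA - 2 * (s * a) * a + a ^ 2 * s))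
    (hw2 : gq ^ 2 * xA - 2 * (gq * b) * a + b ^ 2 * s
        ≤ gq ^ 2 * xG - 2 * (gq * b) * b + b ^ 2 * gq) :
    (xA ≤ xG - s⁻¹ * (a * b + b * a) + ((gq / s + 1) / s) * (a * a)
        ∧ xG - s⁻¹ * (a * b + b * a) + ((gq / s + 1) / s) * (a * a) ≤ η * xA)
      ∧ (xA ≤ xG - gq⁻¹ * (b * b) + s⁻¹ * (a * a)
        ∧ xG - gq⁻¹ * (b * b) + s⁻¹ * (a * a) ≤ η * xA) := by
  have hs0 : s ≠ 0 := hs.ne'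
  have hgq0 : gq ≠ 0 := hgq.ne'
  refine ⟨⟨?_, ?_⟩, ?_, ?_⟩
  · rw [← sub_nonneg]
    have e : xG - s⁻¹ * (a * b + b * a) + ((gq / s + 1) / s) * (a * a) - xA
        = (s ^ 2 * xG - 2 * (s * a) * b + a ^ 2 * gq + s * a ^ 2 - s ^ 2 * xA) / s ^ 2 := by
      field_simp
      ring
    rw [e]
    apply div_nonneg _ (by positivity)
    nlinarith [hw1]
  · rw [← sub_nonneg]
    have e : η * xA - (xG - s⁻¹ * (a * b + b * a) + ((gq / s + 1) / s) * (a * a))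
        = (η * (s ^ 2 * xA) - (s ^ 2 * xG - 2 * (s * a) * b + a ^ 2 * gq) - s * a ^ 2) / s ^ 2 := by
      field_simp
      ring
    rw [e]
    apply div_nonneg _ (by positivity)
    have aux : 0 ≤ (η - 1) * (s * a ^ 2) :=
      mul_nonneg (by linarith) (mul_nonneg hs.le (sq_nonneg _))
    nlinarith [hw1u, aux]
  · rw [← sub_nonneg]
    have e : xG - gq⁻¹ * (b * b) + s⁻¹ * (a * a) - xA
        = (s * (gq ^ 2 * xG) - s * (gq * b ^ 2) + gq ^ 2 * a ^ 2 - s * (gq ^ 2 * xA))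
          / (s * gq ^ 2) := by
      field_simp
    rw [e]
    apply div_nonneg _ (mul_nonneg hs.le (sq_nonneg _))
    have aux1 := mul_le_mul_of_nonneg_left hw2 hs.le
    nlinarith [aux1, sq_nonneg (s * b - gq * a)]
  · rw [← sub_nonneg]
    have e : η * xA - (xG - gq⁻¹ * (b * b) + s⁻¹ * (a * a))
        = (gq * (η * (s ^ 2 * xA)) - gq * (s ^ 2 * xG) + s ^ 2 * b ^ 2 - s * (gq * a ^ 2))
          / (s ^ 2 * gq) := by
      field_simp
      ring
    rw [e]
    apply div_nonneg _ (mul_nonneg (sq_nonneg _) hgq.le)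
    have aux1 := mul_le_mul_of_nonneg_left hw1u hgq.le
    have aux3 : 0 ≤ (η - 1) * (gq * (s * a ^ 2)) :=
      mul_nonneg (by linarith) (mul_nonneg hgq.le (mul_nonneg hs.le (sq_nonneg _)))
    nlinarith [aux1, sq_nonneg (s * b - gq * a), aux3]

private lemma broyd_bounds {A Gm : Matrix (Fin n) (Fin n) ℝ} (hA : A.PosDef) (hG : Gm.PosDef)
    {η : ℝ} (hη : 1 ≤ η) {t : ℝ} (ht0 : 0 ≤ t) (ht1 : t ≤ 1)
    (h1 : psdLE A Gm) (h2 : psdLE Gm (η • A)) (u : Fin n → ℝ) :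
    psdLE A (broyd t A Gm u) ∧ psdLE (broyd t A Gm u) (η • A) := by
  by_cases hu : u = 0
  · rw [broyd, if_pos hu]
    exact ⟨h1, h2⟩
  have hAs : Aᵀ = A := symm_of_herm hA.1
  have hGs : Gmᵀ = Gm := symm_of_herm hG.1
  have hVs : (vecMulVec u u)ᵀ = vecMulVec u u := by
    ext i j
    simp [vecMulVec_apply, mul_comm]
  have hT : ∀ (M N : Matrix (Fin n) (Fin n) ℝ), Mᵀ = M → Nᵀ = N →
      (M * vecMulVec u u * N)ᵀ = N * vecMulVec u u * M := by
    intro M N hM hN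
    simp only [transpose_mul, hM, hN, hVs, Matrix.mul_assoc]
  have hs : 0 < u ⬝ᵥ A *ᵥ u := posDef_dot hA hu
  have hgq : 0 < u ⬝ᵥ Gm *ᵥ u := posDef_dot hG hu
  have haga : 0 ≤ u ⬝ᵥ (A * Gm⁻¹ * A) *ᵥ u := by
    have hpsd : (Aᴴ * Gm⁻¹ * A).PosSemidef :=
      hG.inv.posSemidef.conjTranspose_mul_mul_same A
    rw [hA.1.eq] at hpsd
    have := hpsd.dotProduct_mulVec_nonneg u
    rwa [star_trivial] at this
  set s : ℝ := u ⬝ᵥ A *ᵥ u with hs_eq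
  set gq : ℝ := u ⬝ᵥ Gm *ᵥ u with hgq_eq
  set aga : ℝ := u ⬝ᵥ (A * Gm⁻¹ * A) *ᵥ u with haga_eq
  set φ : ℝ := t * (s / aga) / (t * (s / aga) + (1 - t) * (gq / s)) with hφ_eq
  set Dm : Matrix (Fin n) (Fin n) ℝ :=
    Gm - s⁻¹ • (A * vecMulVec u u * Gm + Gm * vecMulVec u u * A)
      + ((gq / s + 1) / s) • (A * vecMulVec u u * A) with hDm_eq
  set Bm : Matrix (Fin n) (Fin n) ℝ :=
    Gm - gq⁻¹ • (Gm * vecMulVec u u * Gm) + s⁻¹ • (A * vecMulVec u u * A) with hBm_eq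
  have hbroyd : broyd t A Gm u = φ • Dm + (1 - φ) • Bm := by
    rw [broyd, if_neg hu]
  have hφnum : 0 ≤ t * (s / aga) := mul_nonneg ht0 (div_nonneg hs.le haga)
  have hφden2 : 0 ≤ (1 - t) * (gq / s) := by
    have : 0 ≤ gq / s := div_nonneg hgq.le hs.le
    have h1t : 0 ≤ 1 - t := by linarith
    exact mul_nonneg h1t this
  have hφ0 : 0 ≤ φ := div_nonneg hφnum (by linarith)
  have hφ1 : φ ≤ 1 := div_le_one_of_le₀ (by linarith) (by linarith)
  -- pointwise bounds
  have hkey : ∀ x : Fin n → ℝ,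
      (x ⬝ᵥ A *ᵥ x ≤ x ⬝ᵥ Dm *ᵥ x ∧ x ⬝ᵥ Dm *ᵥ x ≤ η * (x ⬝ᵥ A *ᵥ x)) ∧
      (x ⬝ᵥ A *ᵥ x ≤ x ⬝ᵥ Bm *ᵥ x ∧ x ⬝ᵥ Bm *ᵥ x ≤ η * (x ⬝ᵥ A *ᵥ x)) := by
    intro x
    have hw1 := psdLE_dot h1 ((u ⬝ᵥ A *ᵥ u) • x - (x ⬝ᵥ A *ᵥ u) • u)
    rw [quad_comb hAs, quad_comb hGs] at hw1
    have hw1u := psdLE_dot_smul h2 ((u ⬝ᵥ A *ᵥ u) • x - (x ⬝ᵥ A *ᵥ u) • u)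
    rw [quad_comb hGs, quad_comb hAs] at hw1u
    have hw2 := psdLE_dot h1 ((u ⬝ᵥ Gm *ᵥ u) • x - (x ⬝ᵥ Gm *ᵥ u) • u)
    rw [quad_comb hAs, quad_comb hGs] at hw2
    have hDq : x ⬝ᵥ Dm *ᵥ x
        = x ⬝ᵥ Gm *ᵥ x
          - s⁻¹ * ((x ⬝ᵥ A *ᵥ u) * (x ⬝ᵥ Gm *ᵥ u) + (x ⬝ᵥ Gm *ᵥ u) * (x ⬝ᵥ A *ᵥ u))
          + ((gq / s + 1) / s) * ((x ⬝ᵥ A *ᵥ u) * (x ⬝ᵥ A *ᵥ u)) := by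
      rw [hDm_eq]
      rw [add_mulVec, sub_mulVec, smul_mulVec, smul_mulVec, add_mulVec,
        dotProduct_add, dotProduct_sub, dotProduct_smul, dotProduct_smul, dotProduct_add,
        quad_mid, quad_mid, quad_mid, dot_symm hGs u x, dot_symm hAs u x]
      simp only [smul_eq_mul]
    have hBq : x ⬝ᵥ Bm *ᵥ x
        = x ⬝ᵥ Gm *ᵥ x - gq⁻¹ * ((x ⬝ᵥ Gm *ᵥ u) * (x ⬝ᵥ Gm *ᵥ u))
          + s⁻¹ * ((x ⬝ᵥ A *ᵥ u) * (x ⬝ᵥ A *ᵥ u)) := by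
      rw [hBm_eq]
      rw [add_mulVec, sub_mulVec, smul_mulVec, smul_mulVec,
        dotProduct_add, dotProduct_sub, dotProduct_smul, dotProduct_smul,
        quad_mid, quad_mid, dot_symm hGs u x, dot_symm hAs u x]
      simp only [smul_eq_mul]
    have hmain := scalar_bounds (x ⬝ᵥ A *ᵥ x) (x ⬝ᵥ Gm *ᵥ x) (x ⬝ᵥ A *ᵥ u) (x ⬝ᵥ Gm *ᵥ u)
      s gq η hs hgq hη hw1 hw1u hw2
    rw [hDq, hBq]
    exact hmain
  -- Hermitian parts
  have hDsym : Dmᵀ = Dm := by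
    rw [hDm_eq]
    simp only [transpose_add, transpose_sub, transpose_smul, hGs,
      hT A Gm hAs hGs, hT Gm A hGs hAs, hT A A hAs hAs]
    rw [add_comm (Gm * vecMulVec u u * A) (A * vecMulVec u u * Gm)]
  have hBsym : Bmᵀ = Bm := by
    rw [hBm_eq]
    simp only [transpose_add, transpose_sub, transpose_smul, hGs,
      hT Gm Gm hGs hGs, hT A A hAs hAs]
  have hDlow : psdLE A Dm :=
    psdLE_of_herm (herm_of_symm (by rw [transpose_sub, hDsym, hAs])) fun x => (hkey x).1.1
  have hBlow : psdLE A Bm :=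
    psdLE_of_herm (herm_of_symm (by rw [transpose_sub, hBsym, hAs])) fun x => (hkey x).2.1
  have hDup : psdLE Dm (η • A) :=
    psdLE_of_herm (herm_of_symm (by rw [transpose_sub, transpose_smul, hDsym, hAs]))
      fun x => by rw [dot_smul_eq]; exact (hkey x).1.2
  have hBup : psdLE Bm (η • A) :=
    psdLE_of_herm (herm_of_symm (by rw [transpose_sub, transpose_smul, hBsym, hAs]))
      fun x => by rw [dot_smul_eq]; exact (hkey x).2.2
  rw [hbroyd]
  constructor
  · have e : φ • Dm + (1 - φ) • Bm - A
        = (φ • Dm - φ • A) + ((1 - φ) • Bm - (1 - φ) • A) := by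
      module
    unfold psdLE
    rw [e]
    exact (psdLE_smul hDlow hφ0).add (psdLE_smul hBlow (by linarith))
  · have e : η • A - (φ • Dm + (1 - φ) • Bm)
        = (φ • (η • A) - φ • Dm) + ((1 - φ) • (η • A) - (1 - φ) • Bm) := by
      module
    unfold psdLE
    rw [e]
    exact (psdLE_smul hDup hφ0).add (psdLE_smul hBup (by linarith))

private lemma lam_step {A Gm : Matrix (Fin n) (Fin n) ℝ} (hA : A.PosDef) (hG : Gm.PosDef)
    {η : ℝ} (hη : 1 ≤ η) (h1 : psdLE A Gm) (h2 : psdLE Gm (η • A)) (g : Fin n → ℝ) :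
    Real.sqrt ((g - A *ᵥ (Gm⁻¹ *ᵥ g)) ⬝ᵥ A⁻¹ *ᵥ (g - A *ᵥ (Gm⁻¹ *ᵥ g)))
      ≤ (1 - 1 / η) * Real.sqrt (g ⬝ᵥ A⁻¹ *ᵥ g) := by
  have hηpos : 0 < η := lt_of_lt_of_le one_pos hη
  have hc0 : 0 ≤ 1 - 1 / η := by
    have : 1 / η ≤ 1 := by rw [div_le_one hηpos]; exact hη
    linarith
  have hAdet : IsUnit A.det := detUnit hA
  have hAH : Aᴴ = A := hA.1.eq
  have hGinv : psdLE Gm⁻¹ A⁻¹ := psdLE_inv hA hG h1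
  have hηA : (η • A).PosDef := posDef_smul hA hηpos
  have hGinv2 : psdLE (η • A)⁻¹ Gm⁻¹ := psdLE_inv hG hηA h2
  have hsmulinv : (η • A)⁻¹ = η⁻¹ • A⁻¹ := by
    apply Matrix.inv_eq_left_inv
    rw [Matrix.smul_mul, Matrix.mul_smul, Matrix.nonsing_inv_mul A hAdet, smul_smul,
      inv_mul_cancel₀ hηpos.ne', one_smul]
  rw [hsmulinv] at hGinv2
  have hSpsd : (A - A * Gm⁻¹ * A).PosSemidef := by
    have h3 := psdLE_congr hGinv A
    rw [hAH] at h3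
    have e : A * A⁻¹ * A = A := by
      rw [Matrix.mul_nonsing_inv A hAdet, Matrix.one_mul]
    rw [e] at h3
    exact h3
  have hSle : psdLE (A - A * Gm⁻¹ * A) ((1 - 1 / η) • A) := by
    have h3 := psdLE_congr hGinv2 A
    rw [hAH] at h3
    have e : A * (η⁻¹ • A⁻¹) * A = η⁻¹ • A := by
      rw [Matrix.mul_smul, Matrix.smul_mul, Matrix.mul_nonsing_inv A hAdet, Matrix.one_mul]
    rw [e] at h3
    unfold psdLE at h3 ⊢
    have e2 : (1 - 1 / η) • A - (A - A * Gm⁻¹ * A) = A * Gm⁻¹ * A - η⁻¹ • A := by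
      rw [sub_smul, one_smul, one_div]
      abel
    rw [e2]
    exact h3
  have hkey := psdLE_conj_sq hA hSpsd hc0 hSle
  have hgp : g - A *ᵥ (Gm⁻¹ *ᵥ g) = (A - A * Gm⁻¹ * A) *ᵥ (A⁻¹ *ᵥ g) := by
    have e : (A - A * Gm⁻¹ * A) * A⁻¹ = 1 - A * Gm⁻¹ := by
      rw [Matrix.sub_mul, Matrix.mul_nonsing_inv A hAdet, Matrix.mul_assoc (A * Gm⁻¹),
        Matrix.mul_nonsing_inv A hAdet, Matrix.mul_one]
    have e2 : (A - A * Gm⁻¹ * A) *ᵥ (A⁻¹ *ᵥ g) = g - A *ᵥ (Gm⁻¹ *ᵥ g) := by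
      rw [mulVec_mulVec, e, sub_mulVec, one_mulVec, ← mulVec_mulVec]
    exact e2.symm
  have hSs : (A - A * Gm⁻¹ * A)ᵀ = A - A * Gm⁻¹ * A := symm_of_herm hSpsd.1
  rw [hgp, quad_conj hSs]
  have hbound := psdLE_dot hkey (A⁻¹ *ᵥ g)
  rw [dot_smul_eq] at hbound
  have hqA : (A⁻¹ *ᵥ g) ⬝ᵥ A *ᵥ (A⁻¹ *ᵥ g) = g ⬝ᵥ A⁻¹ *ᵥ g := by
    have e : A *ᵥ (A⁻¹ *ᵥ g) = g := by
      rw [mulVec_mulVec, Matrix.mul_nonsing_inv A hAdet, one_mulVec]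
    rw [e, dotProduct_comm]
  rw [hqA] at hbound
  calc Real.sqrt ((A⁻¹ *ᵥ g) ⬝ᵥ ((A - A * Gm⁻¹ * A) * A⁻¹ * (A - A * Gm⁻¹ * A)) *ᵥ (A⁻¹ *ᵥ g))
      ≤ Real.sqrt (((1 - 1 / η) * (1 - 1 / η)) * (g ⬝ᵥ A⁻¹ *ᵥ g)) := Real.sqrt_le_sqrt hbound
    _ = (1 - 1 / η) * Real.sqrt (g ⬝ᵥ A⁻¹ *ᵥ g) := by
        rw [show (1 - 1 / η) * (1 - 1 / η) * (g ⬝ᵥ A⁻¹ *ᵥ g)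
            = (1 - 1 / η) ^ 2 * (g ⬝ᵥ A⁻¹ *ᵥ g) from by ring,
          Real.sqrt_mul (sq_nonneg _), Real.sqrt_sq hc0]

end Helpers

theorem quad_scheme_linear_convergence {n : ℕ} (hn : 1 ≤ n)
    (B A : Matrix (Fin n) (Fin n) ℝ) (hB : B.PosDef) (hA : A.PosDef)
    (μ L : ℝ) (hμ : 0 < μ) (hL : 0 < L)
    (hμB : psdLE (μ • B) A) (hLB : psdLE A (L • B))
    (b : Fin n → ℝ) (τ : ℕ → ℝ) (hτ : ∀ k, τ k ∈ Set.Icc (0 : ℝ) 1)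
    (x : ℕ → Fin n → ℝ) (G : ℕ → Matrix (Fin n) (Fin n) ℝ)
    (hG0 : G 0 = L • B)
    (hx : ∀ k, x (k + 1) = x k - (G k)⁻¹.mulVec (A.mulVec (x k) - b))
    (hGrec : ∀ k, G (k + 1) = broyd (τ k) A (G k) (x (k + 1) - x k))
    (lam : ℕ → ℝ)
    (hlam : ∀ k, lam k =
      Real.sqrt ((A.mulVec (x k) - b) ⬝ᵥ A⁻¹.mulVec (A.mulVec (x k) - b)))
    (k : ℕ) :
    psdLE A (G k) ∧ psdLE (G k) ((L / μ) • A) ∧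
      lam k ≤ (1 - μ / L) ^ k * lam 0 := by
  have i0 : Fin n := ⟨0, hn⟩
  have hsingle : (Pi.single i0 1 : Fin n → ℝ) ≠ 0 := by
    intro h
    have := congrFun h i0
    simp at this
  have hμL : μ ≤ L := by
    have h3 : psdLE (μ • B) (L • B) := psdLE_trans hμB hLB
    have h4 := psdLE_dot h3 (Pi.single i0 1)
    rw [dot_smul_eq, dot_smul_eq] at h4
    have hBpos : 0 < (Pi.single i0 1 : Fin n → ℝ) ⬝ᵥ B *ᵥ Pi.single i0 1 :=
      posDef_dot hB hsingle
    nlinarith [h4, hBpos]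
  have hη : 1 ≤ L / μ := (one_le_div hμ).mpr hμL
  have hc0 : 0 ≤ 1 - μ / L := by
    have : μ / L ≤ 1 := (div_le_one hL).mpr hμL
    linarith
  have hcc : 1 - 1 / (L / μ) = 1 - μ / L := by rw [one_div_div]
  induction k with
  | zero =>
    refine ⟨?_, ?_, by simp⟩
    · rw [hG0]; exact hLB
    · rw [hG0]
      have h5 := psdLE_smul hμB (le_of_lt (div_pos hL hμ))
      rwa [smul_smul, div_mul_cancel₀ _ hμ.ne'] at h5
  | succ k ih =>
    obtain ⟨ih1, ih2, ih3⟩ := ih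
    have hGk : (G k).PosDef := by
      have e : G k = A + (G k - A) := by abel
      rw [e]
      exact hA.add_posSemidef ih1
    have hb := broyd_bounds hA hGk hη (hτ k).1 (hτ k).2 ih1 ih2 (x (k + 1) - x k)
    refine ⟨hGrec k ▸ hb.1, hGrec k ▸ hb.2, ?_⟩
    have hgnext : A *ᵥ x (k + 1) - b
        = (A *ᵥ x k - b) - A *ᵥ ((G k)⁻¹ *ᵥ (A *ᵥ x k - b)) := by
      rw [hx k, mulVec_sub]
      abel
    have hstep := lam_step hA hGk hη ih1 ih2 (A *ᵥ x k - b)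
    rw [hcc] at hstep
    calc lam (k + 1)
        = Real.sqrt ((A *ᵥ x (k + 1) - b) ⬝ᵥ A⁻¹ *ᵥ (A *ᵥ x (k + 1) - b)) := hlam (k + 1)
      _ ≤ (1 - μ / L) * lam k := by
          rw [hgnext, hlam k]
          exact hstep
      _ ≤ (1 - μ / L) * ((1 - μ / L) ^ k * lam 0) := mul_le_mul_of_nonneg_left ih3 hc0
      _ = (1 - μ / L) ^ (k + 1) * lam 0 := by ring
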